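/- Let p_k^♯ denote the k-th primorial (the product of the first k primes). For every even integer d with 2 ≤ d < p_k^♯, the prime-pair singular series satisfies 𝔖(d) < 𝔖(p_k^♯). -/

import Mathlib

open Finset

/-- The twin prime constant `C₂ = ∏_{p > 2} (1 - 1/(p-1)²)`. -/
noncomputable def twinC : ℝ :=
  ∏' p : Nat.Primes, if 2 < (p : ℕ) then (1 - 1 / (((p : ℕ) : ℝ) - 1) ^ 2) else 1

/-- The prime-pair singular series `𝔖(d) = 2C₂ ∏_{p ∣ d, p > 2} (p-1)/(p-2)` for even `d`. -/
noncomputable def S2 (d : ℕ) : ℝ :=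
  2 * twinC * ∏ p ∈ d.primeFactors.filter (fun p => 2 < p), (((p : ℝ) - 1) / ((p : ℝ) - 2))

/-- The `k`-th primorialK, the product of the first `k` primes. -/
noncomputable def primorialK (k : ℕ) : ℕ := ∏ i ∈ Finset.range k, Nat.nth Nat.Prime i

noncomputable def ff (p : ℕ) : ℝ := ((p : ℝ) - 1) / ((p : ℝ) - 2)

lemma three_le_real {p : ℕ} (hp : 2 < p) : (3 : ℝ) ≤ (p : ℝ) := by
  exact_mod_cast hp

lemma ff_one_lt {p : ℕ} (hp : 2 < p) : 1 < ff p := by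
  have h3 := three_le_real hp
  rw [ff, lt_div_iff₀ (by linarith)]
  linarith

lemma ff_pos {p : ℕ} (hp : 2 < p) : 0 < ff p := lt_trans one_pos (ff_one_lt hp)

lemma ff_anti {p q : ℕ} (hp : 2 < p) (hpq : p ≤ q) : ff q ≤ ff p := by
  have h3 := three_le_real hp
  have h3q : (3 : ℝ) ≤ (q : ℝ) := le_trans h3 (by exact_mod_cast hpq)
  have hpq' : (p : ℝ) ≤ (q : ℝ) := by exact_mod_cast hpq
  rw [ff, ff, div_le_div_iff₀ (by linarith) (by linarith)]
  nlinarith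

lemma nth_prime_prime (i : ℕ) : (Nat.nth Nat.Prime i).Prime :=
  Nat.nth_mem_of_infinite Nat.infinite_setOf_prime i

lemma nth_prime_gt_two {i : ℕ} (hi : 0 < i) : 2 < Nat.nth Nat.Prime i := by
  have := (Nat.nth_lt_nth Nat.infinite_setOf_prime (k := 0) (n := i)).2 hi
  rwa [Nat.nth_prime_zero_eq_two] at this

/-- Core induction: a finite set of odd primes whose product is smaller than the product
of the first `m` odd primes has a smaller `ff`-product. -/
lemma core (m : ℕ) : ∀ A : Finset ℕ, (∀ a ∈ A, a.Prime ∧ 2 < a) →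
    (∏ a ∈ A, a) < (∏ i ∈ Finset.range m, Nat.nth Nat.Prime (i + 1)) →
    (∏ a ∈ A, ff a) < ∏ i ∈ Finset.range m, ff (Nat.nth Nat.Prime (i + 1)) := by
  induction m with
  | zero =>
    intro A hA h
    simp only [Finset.range_zero, Finset.prod_empty] at h
    have : (1 : ℕ) ≤ ∏ a ∈ A, a :=
      Finset.one_le_prod' (fun a ha => (hA a ha).1.one_lt.le)
    omega
  | succ m ih =>
    intro A hA h
    have hposR : (0 : ℝ) < ∏ i ∈ Finset.range m, ff (Nat.nth Nat.Prime (i + 1)) :=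
      Finset.prod_pos (fun i _ => ff_pos (nth_prime_gt_two (Nat.succ_pos i)))
    have hffm : 1 < ff (Nat.nth Nat.Prime (m + 1)) := ff_one_lt (nth_prime_gt_two (Nat.succ_pos m))
    rcases A.eq_empty_or_nonempty with rfl | hne
    · simp only [Finset.prod_empty]
      have := Finset.prod_lt_prod_of_nonempty (s := Finset.range (m + 1)) (f := fun _ : ℕ => (1 : ℝ))
        (g := fun i => ff (Nat.nth Nat.Prime (i + 1))) (fun i _ => one_pos)
        (fun i _ => ff_one_lt (nth_prime_gt_two (Nat.succ_pos i))) Finset.nonempty_range_add_one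
      simpa using this
    · set a := A.max' hne with ha_def
      have haA : a ∈ A := A.max'_mem hne
      obtain ⟨hap, ha2⟩ := hA a haA
      rw [Finset.prod_range_succ] at h
      rw [Finset.prod_range_succ]
      rcases le_or_gt (Nat.nth Nat.Prime (m + 1)) a with hge | hlt
      · -- pair the max of A with the largest prime on the right
        have hkey : a * ∏ x ∈ A.erase a, x = ∏ x ∈ A, x := Finset.mul_prod_erase A (fun x => x) haA
        have hnpos : 0 < Nat.nth Nat.Prime (m + 1) := (nth_prime_prime (m + 1)).pos
        have herase : (∏ x ∈ A.erase a, x) < ∏ i ∈ Finset.range m, Nat.nth Nat.Prime (i + 1) := by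
          have h1 : Nat.nth Nat.Prime (m + 1) * ∏ x ∈ A.erase a, x ≤ a * ∏ x ∈ A.erase a, x :=
            Nat.mul_le_mul_right _ hge
          have h2 : a * ∏ x ∈ A.erase a, x <
              Nat.nth Nat.Prime (m + 1) * ∏ i ∈ Finset.range m, Nat.nth Nat.Prime (i + 1) := by
            rw [hkey]; linarith [h]
          have := lt_of_le_of_lt h1 h2
          exact lt_of_mul_lt_mul_left this (Nat.zero_le _)
        have hIH := ih (A.erase a) (fun x hx => hA x (Finset.mem_of_mem_erase hx)) herase
        have hfa : ff a ≤ ff (Nat.nth Nat.Prime (m + 1)) :=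
          ff_anti (nth_prime_gt_two (Nat.succ_pos m)) hge
        have hAeq : (∏ x ∈ A, ff x) = ff a * ∏ x ∈ A.erase a, ff x :=
          (Finset.mul_prod_erase A _ haA).symm
        have heposf : (0 : ℝ) < ∏ x ∈ A.erase a, ff x :=
          Finset.prod_pos (fun x hx => ff_pos (hA x (Finset.mem_of_mem_erase hx)).2)
        rw [hAeq, mul_comm (∏ i ∈ Finset.range m, ff (Nat.nth Nat.Prime (i + 1)))]
        calc ff a * ∏ x ∈ A.erase a, ff x
            ≤ ff (Nat.nth Nat.Prime (m + 1)) * ∏ x ∈ A.erase a, ff x :=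
              mul_le_mul_of_nonneg_right hfa heposf.le
          _ < ff (Nat.nth Nat.Prime (m + 1)) * ∏ i ∈ Finset.range m, ff (Nat.nth Nat.Prime (i + 1)) :=
              mul_lt_mul_of_pos_left hIH (lt_trans one_pos hffm)
      · -- every element of A is among the first m odd primes
        have hsub : A ⊆ (Finset.range m).image (fun i => Nat.nth Nat.Prime (i + 1)) := by
          intro x hx
          obtain ⟨hxp, hx2⟩ := hA x hx
          have hxa : x ≤ a := A.le_max' x hx
          have hxlt : x < Nat.nth Nat.Prime (m + 1) := lt_of_le_of_lt hxa hlt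
          have hc : Nat.nth Nat.Prime (Nat.count Nat.Prime x) = x := Nat.nth_count hxp
          have hc1 : 1 ≤ Nat.count Nat.Prime x := by
            have h3 : Nat.count Nat.Prime 3 ≤ Nat.count Nat.Prime x :=
              Nat.count_monotone _ hx2
            have : Nat.count Nat.Prime 3 = 1 := by decide
            omega
          have hcm : Nat.count Nat.Prime x < m + 1 := by
            have : Nat.nth Nat.Prime (Nat.count Nat.Prime x) < Nat.nth Nat.Prime (m + 1) := by
              rwa [hc]
            exact (Nat.nth_lt_nth Nat.infinite_setOf_prime).1 this
          refine Finset.mem_image.2 ⟨Nat.count Nat.Prime x - 1, Finset.mem_range.2 (by omega), ?_⟩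
          rw [Nat.sub_add_cancel hc1, hc]
        have hinj : Set.InjOn (fun i => Nat.nth Nat.Prime (i + 1)) (Finset.range m) := by
          intro i _ j _ hij
          have := Nat.nth_injective Nat.infinite_setOf_prime hij
          omega
        have hprodim : (∏ x ∈ (Finset.range m).image (fun i => Nat.nth Nat.Prime (i + 1)), ff x)
            = ∏ i ∈ Finset.range m, ff (Nat.nth Nat.Prime (i + 1)) :=
          Finset.prod_image (fun i hi j hj hij => hinj hi hj hij)
        have hle : (∏ x ∈ A, ff x) ≤
            ∏ x ∈ (Finset.range m).image (fun i => Nat.nth Nat.Prime (i + 1)), ff x := by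
          rw [← Finset.prod_sdiff hsub]
          have h1le : (1 : ℝ) ≤
              ∏ x ∈ ((Finset.range m).image (fun i => Nat.nth Nat.Prime (i + 1))) \ A, ff x := by
            calc (1 : ℝ) = ∏ _x ∈ ((Finset.range m).image (fun i => Nat.nth Nat.Prime (i + 1))) \ A, (1 : ℝ) := by simp
              _ ≤ _ := by
                refine Finset.prod_le_prod (fun x _ => zero_le_one) (fun x hx => ?_)
                obtain ⟨i, _, rfl⟩ := Finset.mem_image.1 (Finset.mem_sdiff.1 hx).1
                exact (ff_one_lt (nth_prime_gt_two (Nat.succ_pos i))).le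
          have hApos : (0 : ℝ) < ∏ x ∈ A, ff x :=
            Finset.prod_pos (fun x hx => ff_pos (hA x hx).2)
          nlinarith
        calc (∏ x ∈ A, ff x)
            ≤ ∏ i ∈ Finset.range m, ff (Nat.nth Nat.Prime (i + 1)) := by rw [← hprodim]; exact hle
          _ < (∏ i ∈ Finset.range m, ff (Nat.nth Nat.Prime (i + 1))) * ff (Nat.nth Nat.Prime (m + 1)) := by
              nlinarith

lemma twinC_pos : 0 < twinC := by
  set f : Nat.Primes → ℝ :=
    fun p => if 2 < (p : ℕ) then (1 - 1 / (((p : ℕ) : ℝ) - 1) ^ 2) else 1 with hf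
  have hpos : ∀ p : Nat.Primes, 0 < f p := by
    intro p
    rw [hf]
    dsimp only
    split_ifs with h
    · have h3 : (3 : ℝ) ≤ ((p : ℕ) : ℝ) := three_le_real h
      have h4 : (2 : ℝ) ≤ ((p : ℕ) : ℝ) - 1 := by linarith
      have h5 : (4 : ℝ) ≤ (((p : ℕ) : ℝ) - 1) ^ 2 := by nlinarith
      have : 1 / (((p : ℕ) : ℝ) - 1) ^ 2 ≤ 1 / 4 := by
        apply div_le_div_of_nonneg_left (by norm_num) (by norm_num) h5
      linarith
    · norm_num
  -- summability of the logs
  have hG : Summable (fun n : ℕ => 2 / ((n : ℝ) - 1) ^ 2) := by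
    rw [← summable_nat_add_iff 2]
    have h1 : Summable (fun n : ℕ => 1 / ((n : ℝ) + 1) ^ 2) := by
      have := (summable_nat_add_iff (f := fun n : ℕ => 1 / (n : ℝ) ^ 2) 1).2
        (Real.summable_one_div_nat_pow.2 one_lt_two)
      apply this.congr
      intro n
      push_cast
      ring
    have := h1.mul_left 2
    apply this.congr
    intro n
    push_cast
    ring_nf
  have hGsub : Summable (fun p : Nat.Primes => 2 / (((p : ℕ) : ℝ) - 1) ^ 2) :=
    hG.comp_injective Nat.Primes.coe_nat_injective
  have hsum : Summable fun p : Nat.Primes => Real.log (f p) := by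
    apply Summable.of_norm
    apply Summable.of_nonneg_of_le (fun p => norm_nonneg _) _ hGsub
    intro p
    rw [Real.norm_eq_abs]
    rw [hf]
    dsimp only
    split_ifs with h
    · have h3 : (3 : ℝ) ≤ ((p : ℕ) : ℝ) := three_le_real h
      set y : ℝ := (((p : ℕ) : ℝ) - 1) ^ 2 with hy
      have hy4 : (4 : ℝ) ≤ y := by rw [hy]; nlinarith
      have hfp : (0 : ℝ) < 1 - 1 / y := by
        have : 1 / y ≤ 1 / 4 := div_le_div_of_nonneg_left (by norm_num) (by norm_num) hy4
        linarith
      have hfle : 1 - 1 / y ≤ 1 := by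
        have : 0 ≤ 1 / y := by positivity
        linarith
      have hlogle : Real.log (1 - 1 / y) ≤ 0 := Real.log_nonpos hfp.le hfle
      rw [abs_of_nonpos hlogle]
      have hinv : -Real.log (1 - 1 / y) = Real.log (1 - 1 / y)⁻¹ := by
        rw [Real.log_inv]
      rw [hinv]
      have hle1 : Real.log (1 - 1 / y)⁻¹ ≤ (1 - 1 / y)⁻¹ - 1 :=
        Real.log_le_sub_one_of_pos (by positivity)
      have hle2 : (1 - 1 / y)⁻¹ - 1 ≤ 2 / y := by
        have hy0 : (0 : ℝ) < y := by linarith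
        have hy1 : (0 : ℝ) < y - 1 := by linarith
        have hinv2 : (1 - 1 / y)⁻¹ = y / (y - 1) := by
          have hrw : 1 - 1 / y = (y - 1) / y := by field_simp
          rw [hrw, inv_div]
        rw [hinv2, div_sub_one (ne_of_gt hy1), div_le_div_iff₀ hy1 hy0]
        nlinarith
      linarith
    · simp only [Real.log_one, abs_zero]
      positivity
  have key := Real.rexp_tsum_eq_tprod hpos hsum
  have h2 : twinC = Real.exp (∑' p : Nat.Primes, Real.log (f p)) := by
    rw [key]; rfl
  rw [h2]
  exact Real.exp_pos _

theorem S2_lt_S2_primorial (k : ℕ) (hk : 1 ≤ k) (d : ℕ) (he : Even d)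
    (h2 : 2 ≤ d) (hlt : d < primorialK k) :
    S2 d < S2 (primorialK k) := by
  obtain ⟨k', rfl⟩ : ∃ k', k = k' + 1 := ⟨k - 1, by omega⟩
  have hd0 : d ≠ 0 := by omega
  -- decompose the primorial
  have hprim : primorialK (k' + 1) = 2 * ∏ i ∈ Finset.range k', Nat.nth Nat.Prime (i + 1) := by
    rw [primorialK, Finset.prod_range_succ']
    rw [Nat.nth_prime_zero_eq_two, mul_comm]
  set Q := d.primeFactors.filter (fun p => 2 < p) with hQ
  have hQmem : ∀ q ∈ Q, q.Prime ∧ 2 < q := by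
    intro q hq
    rw [hQ, Finset.mem_filter, Nat.mem_primeFactors] at hq
    exact ⟨hq.1.1, hq.2⟩
  -- 2 * ∏ Q ≤ d
  have hsplit : (∏ p ∈ d.primeFactors, p) = (∏ q ∈ Q, q) * 2 := by
    rw [← Finset.prod_filter_mul_prod_filter_not d.primeFactors (fun p => 2 < p)]
    congr 1
    have : d.primeFactors.filter (fun p => ¬ 2 < p) = {2} := by
      ext p
      simp only [Finset.mem_filter, Nat.mem_primeFactors, Finset.mem_singleton, not_lt]
      constructor
      · rintro ⟨⟨hp, _, _⟩, hle⟩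
        have := hp.two_le
        omega
      · rintro rfl
        exact ⟨⟨Nat.prime_two, he.two_dvd, hd0⟩, le_refl 2⟩
    rw [this, Finset.prod_singleton]
  have hdvd : (∏ p ∈ d.primeFactors, p) ≤ d :=
    Nat.le_of_dvd (by omega) (Nat.prod_primeFactors_dvd d)
  have hQlt : (∏ q ∈ Q, q) < ∏ i ∈ Finset.range k', Nat.nth Nat.Prime (i + 1) := by
    rw [hsplit] at hdvd
    rw [hprim] at hlt
    omega
  have hcore := core k' Q hQmem hQlt
  -- rewrite the RHS product
  have hinj : Function.Injective (Nat.nth Nat.Prime) :=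
    Nat.nth_injective Nat.infinite_setOf_prime
  have hpf : (primorialK (k' + 1)).primeFactors
      = (Finset.range (k' + 1)).image (Nat.nth Nat.Prime) := by
    have h0 : (∏ i ∈ Finset.range (k' + 1), Nat.nth Nat.Prime i)
        = ∏ p ∈ (Finset.range (k' + 1)).image (Nat.nth Nat.Prime), p :=
      (Finset.prod_image (f := fun p => p) (fun i _ j _ h => hinj h)).symm
    rw [primorialK, h0]
    exact Nat.primeFactors_prod (by
      intro p hp
      obtain ⟨i, _, rfl⟩ := Finset.mem_image.1 hp
      exact nth_prime_prime i)
  have hfilter : ((primorialK (k' + 1)).primeFactors).filter (fun p => 2 < p)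
      = (Finset.range k').image (fun i => Nat.nth Nat.Prime (i + 1)) := by
    rw [hpf, Finset.filter_image]
    have h1 : (Finset.range (k' + 1)).filter (fun i => 2 < Nat.nth Nat.Prime i)
        = (Finset.range k').image (fun i => i + 1) := by
      ext i
      simp only [Finset.mem_filter, Finset.mem_range, Finset.mem_image]
      constructor
      · rintro ⟨hik, h2i⟩
        have hi0 : 0 < i := by
          by_contra hcon
          push_neg at hcon
          interval_cases i
          rw [Nat.nth_prime_zero_eq_two] at h2i
          omega
        exact ⟨i - 1, by omega, by omega⟩
      · rintro ⟨j, hj, rfl⟩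
        exact ⟨by omega, nth_prime_gt_two (by omega)⟩
    rw [h1, Finset.image_image]
    rfl
  have hRHS : (∏ p ∈ ((primorialK (k' + 1)).primeFactors).filter (fun p => 2 < p),
        (((p : ℝ) - 1) / ((p : ℝ) - 2)))
      = ∏ i ∈ Finset.range k', ff (Nat.nth Nat.Prime (i + 1)) := by
    rw [hfilter]
    exact Finset.prod_image (fun i _ j _ h => by have := hinj h; omega)
  have hLHS : (∏ p ∈ Q, (((p : ℝ) - 1) / ((p : ℝ) - 2))) = ∏ q ∈ Q, ff q := rfl
  rw [S2, S2, hRHS, ← hQ, hLHS]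
  have htw : (0 : ℝ) < 2 * twinC := by linarith [twinC_pos]
  exact mul_lt_mul_of_pos_left hcore htw
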